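/- Let γ ≥ 2, c > 0, β ∈ (0,1) the solution of 3β - 2 = γ√((1-β)³), and P(λ) = c(γ(1-λ)/λ + 2√(1-λ)/λ). Define L(λ) = P(λ) for 0 < λ ≤ β and L(λ) = P(β) + P'(β)(λ - β) for β < λ ≤ 1. Then L(λ) ≤ P(λ) for all λ ∈ (0,1], and L is convex on (0,1]. -/

import Mathlib

open Real Set

lemma bern_aux (x y z : ℝ) (hx : 0 ≤ x) (hy : 0 ≤ y) (hz : 0 ≤ z) :
    (0:ℝ) ≤ 2 * x^0 * y^3 * z^6 +
      12 * x^0 * y^4 * z^5 +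
      29 * x^0 * y^5 * z^4 +
      36 * x^0 * y^6 * z^3 +
      24 * x^0 * y^7 * z^2 +
      8 * x^0 * y^8 * z^1 +
      1 * x^0 * y^9 * z^0 +
      6 * x^1 * y^2 * z^6 +
      48 * x^1 * y^3 * z^5 +
      145 * x^1 * y^4 * z^4 +
      216 * x^1 * y^5 * z^3 +
      168 * x^1 * y^6 * z^2 +
      64 * x^1 * y^7 * z^1 +
      9 * x^1 * y^8 * z^0 +
      3 * x^2 * y^1 * z^6 +
      54 * x^2 * y^2 * z^5 +
      241 * x^2 * y^3 * z^4 +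
      464 * x^2 * y^4 * z^3 +
      437 * x^2 * y^5 * z^2 +
      194 * x^2 * y^6 * z^1 +
      31 * x^2 * y^7 * z^0 +
      18 * x^3 * y^1 * z^5 +
      159 * x^3 * y^2 * z^4 +
      440 * x^3 * y^3 * z^3 +
      526 * x^3 * y^4 * z^2 +
      278 * x^3 * y^5 * z^1 +
      51 * x^3 * y^6 * z^0 +
      36 * x^4 * y^1 * z^4 +
      180 * x^4 * y^2 * z^3 +
      292 * x^4 * y^3 * z^2 +
      188 * x^4 * y^4 * z^1 +
      40 * x^4 * y^5 * z^0 +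
      24 * x^5 * y^1 * z^3 +
      60 * x^5 * y^2 * z^2 +
      48 * x^5 * y^3 * z^1 +
      12 * x^5 * y^4 * z^0 := by
  linarith [mul_nonneg (mul_nonneg (mul_nonneg (by norm_num : (0:ℝ) ≤ 2) (pow_nonneg hx 0)) (pow_nonneg hy 3)) (pow_nonneg hz 6),
    mul_nonneg (mul_nonneg (mul_nonneg (by norm_num : (0:ℝ) ≤ 12) (pow_nonneg hx 0)) (pow_nonneg hy 4)) (pow_nonneg hz 5),
    mul_nonneg (mul_nonneg (mul_nonneg (by norm_num : (0:ℝ) ≤ 29) (pow_nonneg hx 0)) (pow_nonneg hy 5)) (pow_nonneg hz 4),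
    mul_nonneg (mul_nonneg (mul_nonneg (by norm_num : (0:ℝ) ≤ 36) (pow_nonneg hx 0)) (pow_nonneg hy 6)) (pow_nonneg hz 3),
    mul_nonneg (mul_nonneg (mul_nonneg (by norm_num : (0:ℝ) ≤ 24) (pow_nonneg hx 0)) (pow_nonneg hy 7)) (pow_nonneg hz 2),
    mul_nonneg (mul_nonneg (mul_nonneg (by norm_num : (0:ℝ) ≤ 8) (pow_nonneg hx 0)) (pow_nonneg hy 8)) (pow_nonneg hz 1),
    mul_nonneg (mul_nonneg (mul_nonneg (by norm_num : (0:ℝ) ≤ 1) (pow_nonneg hx 0)) (pow_nonneg hy 9)) (pow_nonneg hz 0),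
    mul_nonneg (mul_nonneg (mul_nonneg (by norm_num : (0:ℝ) ≤ 6) (pow_nonneg hx 1)) (pow_nonneg hy 2)) (pow_nonneg hz 6),
    mul_nonneg (mul_nonneg (mul_nonneg (by norm_num : (0:ℝ) ≤ 48) (pow_nonneg hx 1)) (pow_nonneg hy 3)) (pow_nonneg hz 5),
    mul_nonneg (mul_nonneg (mul_nonneg (by norm_num : (0:ℝ) ≤ 145) (pow_nonneg hx 1)) (pow_nonneg hy 4)) (pow_nonneg hz 4),
    mul_nonneg (mul_nonneg (mul_nonneg (by norm_num : (0:ℝ) ≤ 216) (pow_nonneg hx 1)) (pow_nonneg hy 5)) (pow_nonneg hz 3),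
    mul_nonneg (mul_nonneg (mul_nonneg (by norm_num : (0:ℝ) ≤ 168) (pow_nonneg hx 1)) (pow_nonneg hy 6)) (pow_nonneg hz 2),
    mul_nonneg (mul_nonneg (mul_nonneg (by norm_num : (0:ℝ) ≤ 64) (pow_nonneg hx 1)) (pow_nonneg hy 7)) (pow_nonneg hz 1),
    mul_nonneg (mul_nonneg (mul_nonneg (by norm_num : (0:ℝ) ≤ 9) (pow_nonneg hx 1)) (pow_nonneg hy 8)) (pow_nonneg hz 0),
    mul_nonneg (mul_nonneg (mul_nonneg (by norm_num : (0:ℝ) ≤ 3) (pow_nonneg hx 2)) (pow_nonneg hy 1)) (pow_nonneg hz 6),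
    mul_nonneg (mul_nonneg (mul_nonneg (by norm_num : (0:ℝ) ≤ 54) (pow_nonneg hx 2)) (pow_nonneg hy 2)) (pow_nonneg hz 5),
    mul_nonneg (mul_nonneg (mul_nonneg (by norm_num : (0:ℝ) ≤ 241) (pow_nonneg hx 2)) (pow_nonneg hy 3)) (pow_nonneg hz 4),
    mul_nonneg (mul_nonneg (mul_nonneg (by norm_num : (0:ℝ) ≤ 464) (pow_nonneg hx 2)) (pow_nonneg hy 4)) (pow_nonneg hz 3),
    mul_nonneg (mul_nonneg (mul_nonneg (by norm_num : (0:ℝ) ≤ 437) (pow_nonneg hx 2)) (pow_nonneg hy 5)) (pow_nonneg hz 2),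
    mul_nonneg (mul_nonneg (mul_nonneg (by norm_num : (0:ℝ) ≤ 194) (pow_nonneg hx 2)) (pow_nonneg hy 6)) (pow_nonneg hz 1),
    mul_nonneg (mul_nonneg (mul_nonneg (by norm_num : (0:ℝ) ≤ 31) (pow_nonneg hx 2)) (pow_nonneg hy 7)) (pow_nonneg hz 0),
    mul_nonneg (mul_nonneg (mul_nonneg (by norm_num : (0:ℝ) ≤ 18) (pow_nonneg hx 3)) (pow_nonneg hy 1)) (pow_nonneg hz 5),
    mul_nonneg (mul_nonneg (mul_nonneg (by norm_num : (0:ℝ) ≤ 159) (pow_nonneg hx 3)) (pow_nonneg hy 2)) (pow_nonneg hz 4),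
    mul_nonneg (mul_nonneg (mul_nonneg (by norm_num : (0:ℝ) ≤ 440) (pow_nonneg hx 3)) (pow_nonneg hy 3)) (pow_nonneg hz 3),
    mul_nonneg (mul_nonneg (mul_nonneg (by norm_num : (0:ℝ) ≤ 526) (pow_nonneg hx 3)) (pow_nonneg hy 4)) (pow_nonneg hz 2),
    mul_nonneg (mul_nonneg (mul_nonneg (by norm_num : (0:ℝ) ≤ 278) (pow_nonneg hx 3)) (pow_nonneg hy 5)) (pow_nonneg hz 1),
    mul_nonneg (mul_nonneg (mul_nonneg (by norm_num : (0:ℝ) ≤ 51) (pow_nonneg hx 3)) (pow_nonneg hy 6)) (pow_nonneg hz 0),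
    mul_nonneg (mul_nonneg (mul_nonneg (by norm_num : (0:ℝ) ≤ 36) (pow_nonneg hx 4)) (pow_nonneg hy 1)) (pow_nonneg hz 4),
    mul_nonneg (mul_nonneg (mul_nonneg (by norm_num : (0:ℝ) ≤ 180) (pow_nonneg hx 4)) (pow_nonneg hy 2)) (pow_nonneg hz 3),
    mul_nonneg (mul_nonneg (mul_nonneg (by norm_num : (0:ℝ) ≤ 292) (pow_nonneg hx 4)) (pow_nonneg hy 3)) (pow_nonneg hz 2),
    mul_nonneg (mul_nonneg (mul_nonneg (by norm_num : (0:ℝ) ≤ 188) (pow_nonneg hx 4)) (pow_nonneg hy 4)) (pow_nonneg hz 1),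
    mul_nonneg (mul_nonneg (mul_nonneg (by norm_num : (0:ℝ) ≤ 40) (pow_nonneg hx 4)) (pow_nonneg hy 5)) (pow_nonneg hz 0),
    mul_nonneg (mul_nonneg (mul_nonneg (by norm_num : (0:ℝ) ≤ 24) (pow_nonneg hx 5)) (pow_nonneg hy 1)) (pow_nonneg hz 3),
    mul_nonneg (mul_nonneg (mul_nonneg (by norm_num : (0:ℝ) ≤ 60) (pow_nonneg hx 5)) (pow_nonneg hy 2)) (pow_nonneg hz 2),
    mul_nonneg (mul_nonneg (mul_nonneg (by norm_num : (0:ℝ) ≤ 48) (pow_nonneg hx 5)) (pow_nonneg hy 3)) (pow_nonneg hz 1),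
    mul_nonneg (mul_nonneg (mul_nonneg (by norm_num : (0:ℝ) ≤ 12) (pow_nonneg hx 5)) (pow_nonneg hy 4)) (pow_nonneg hz 0)]

lemma key_mono (a b : ℝ) (ha : 0 ≤ a) (hab : a ≤ b) (hb : b ≤ 1) :
    0 ≤ (1-3*a^2)*b*(b^2-a^2)*(2-a^2-b^2)
      + a^2*((1+b^2)*a*(1-a^2)^2 - (1+a^2)*b*(1-b^2)^2) := by
  have h := bern_aux a (b-a) (1-b) ha (by linarith) (by linarith)
  linarith [h]

set_option maxHeartbeats 1000000 in
theorem stmt_10 (c γ β : ℝ) (hc : 0 < c) (hγ : 2 ≤ γ) (hβ : β ∈ Set.Ioo (0:ℝ) 1)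
    (hβeq : 3 * β - 2 = γ * Real.sqrt ((1 - β) ^ 3)) :
    let P : ℝ → ℝ := fun lam => c * (γ * (1 - lam) / lam + 2 * Real.sqrt (1 - lam) / lam)
    let L : ℝ → ℝ := fun lam =>
      if lam ≤ β then P lam else P β + deriv P β * (lam - β)
    (∀ lam ∈ Set.Ioc (0:ℝ) 1, L lam ≤ P lam) ∧ ConvexOn ℝ (Set.Ioc (0:ℝ) 1) L := by
  obtain ⟨hβ0, hβ1⟩ := hβ
  intro P L
  set s := Real.sqrt (1 - β) with hs_def
  have hs0 : 0 < s := Real.sqrt_pos.2 (by linarith)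
  have hs2 : s ^ 2 = 1 - β := Real.sq_sqrt (by linarith)
  have hγ0 : 0 < γ := by linarith
  have hγs : γ * s ^ 3 = 1 - 3 * s ^ 2 := by
    have h3 : Real.sqrt ((1 - β) ^ 3) = s ^ 3 := by
      rw [show (1 - β) ^ 3 = (s ^ 3) ^ 2 by rw [← hs2]; ring]
      exact Real.sqrt_sq (by positivity)
    rw [h3] at hβeq
    linarith
  have hγ' : γ = (1 - 3 * s ^ 2) / s ^ 3 := by
    rw [eq_div_iff (ne_of_gt (show (0:ℝ) < s ^ 3 by positivity))]
    exact hγs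
  -- derivative of P at every point of Ioo 0 1
  have hPd : ∀ x ∈ Ioo (0:ℝ) 1,
      HasDerivAt P (-(c * (γ * Real.sqrt (1 - x) + 2 - x)) / (Real.sqrt (1 - x) * x ^ 2)) x := by
    intro x hx
    obtain ⟨hx0, hx1⟩ := hx
    have h1x : (0:ℝ) < 1 - x := by linarith
    have hne : x ≠ 0 := ne_of_gt hx0
    have h1 : HasDerivAt (fun y : ℝ => 1 - y) (-1) x := by
      simpa using (hasDerivAt_id x).const_sub 1
    have h2 : HasDerivAt (fun y : ℝ => Real.sqrt (1 - y))
        (1 / (2 * Real.sqrt (1 - x)) * -1) x :=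
      (Real.hasDerivAt_sqrt (ne_of_gt h1x)).comp x h1
    have h4 : HasDerivAt (fun y : ℝ => γ * (1 - y) / y)
        ((γ * -1 * x - γ * (1 - x) * 1) / x ^ 2) x :=
      (h1.const_mul γ).div (hasDerivAt_id x) hne
    have h6 : HasDerivAt (fun y : ℝ => 2 * Real.sqrt (1 - y) / y)
        ((2 * (1 / (2 * Real.sqrt (1 - x)) * -1) * x - 2 * Real.sqrt (1 - x) * 1) / x ^ 2) x :=
      (h2.const_mul 2).div (hasDerivAt_id x) hne
    have h7 := (h4.add h6).const_mul c
    refine h7.congr_deriv ?_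
    set t := Real.sqrt (1 - x) with ht_def
    have ht0 : 0 < t := Real.sqrt_pos.2 h1x
    have ht2 : t ^ 2 = 1 - x := Real.sq_sqrt h1x.le
    have hx' : x = 1 - t ^ 2 := by linarith
    have htne : t ≠ 0 := ne_of_gt ht0
    have h2ne : 1 - t ^ 2 ≠ 0 := by rw [← hx']; exact hne
    rw [hx']
    field_simp
    ring
  have hβIoo : β ∈ Ioo (0:ℝ) 1 := ⟨hβ0, hβ1⟩
  have hPβ := hPd β hβIoo
  rw [← hs_def] at hPβ
  have hderivβ : deriv P β = -(c * (γ * s + 2 - β)) / (s * β ^ 2) := hPβ.deriv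
  have hst0 : 0 < 1 - s ^ 2 := by rw [hs2]; linarith
  -- Part 1
  have part1 : ∀ lam ∈ Ioc (0:ℝ) 1, L lam ≤ P lam := by
    intro lam hlam
    obtain ⟨hl0, hl1⟩ := hlam
    by_cases hle : lam ≤ β
    · simp only [L, if_pos hle]
      exact le_refl _
    · push_neg at hle
      simp only [L, if_neg (not_le.2 hle)]
      rw [hderivβ]
      simp only [P]
      rw [← hs_def]
      set t := Real.sqrt (1 - lam) with ht_def
      have ht0 : 0 ≤ t := Real.sqrt_nonneg _
      have ht2 : t ^ 2 = 1 - lam := Real.sq_sqrt (by linarith)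
      have hts : t < s := by
        rw [hs_def, ht_def]
        exact Real.sqrt_lt_sqrt (by linarith) (by linarith)
      have hlam' : lam = 1 - t ^ 2 := by linarith
      have hβ' : β = 1 - s ^ 2 := by linarith
      have hlt : 0 < 1 - t ^ 2 := by rw [← hlam']; exact hl0
      rw [hγ', hlam', hβ', ← sub_nonneg]
      have hltne : 1 - t ^ 2 ≠ 0 := ne_of_gt hlt
      have hstne : 1 - s ^ 2 ≠ 0 := ne_of_gt hst0
      have hsne : s ≠ 0 := ne_of_gt hs0
      have key : 0 ≤ c * t * (s - t) ^ 2 * (t + 2 * s) / ((1 - t ^ 2) * s ^ 3) := by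
        apply div_nonneg
        · exact mul_nonneg (mul_nonneg (mul_nonneg hc.le ht0) (sq_nonneg _)) (by linarith)
        · exact (mul_pos hlt (by positivity)).le
      convert key using 1
      field_simp
      ring
  -- core monotonicity of the derivative formula
  have hcore : ∀ u v : ℝ, 0 < u → u ≤ v → v ≤ β →
      -(c * (γ * Real.sqrt (1 - u) + 2 - u)) / (Real.sqrt (1 - u) * u ^ 2) ≤
      -(c * (γ * Real.sqrt (1 - v) + 2 - v)) / (Real.sqrt (1 - v) * v ^ 2) := by
    intro u v hu0 huv hvβ
    have hv1 : v < 1 := lt_of_le_of_lt hvβ hβ1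
    have hu1 : u < 1 := lt_of_le_of_lt huv hv1
    set a := Real.sqrt (1 - v) with ha_def
    set b := Real.sqrt (1 - u) with hb_def
    have ha0 : 0 < a := Real.sqrt_pos.2 (by linarith)
    have hb0 : 0 < b := Real.sqrt_pos.2 (by linarith)
    have ha2 : a ^ 2 = 1 - v := Real.sq_sqrt (by linarith)
    have hb2 : b ^ 2 = 1 - u := Real.sq_sqrt (by linarith)
    have hab : a ≤ b := by
      rw [ha_def, hb_def]
      exact Real.sqrt_le_sqrt (by linarith)
    have hb1 : b ≤ 1 := by nlinarith
    have hsa : s ≤ a := by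
      rw [hs_def, ha_def]
      exact Real.sqrt_le_sqrt (by linarith)
    have hγa : 1 - 3 * a ^ 2 ≤ γ * a ^ 3 := by
      have h3 : s ^ 3 ≤ a ^ 3 := pow_le_pow_left₀ hs0.le hsa 3
      nlinarith
    have hu' : u = 1 - b ^ 2 := by linarith
    have hv' : v = 1 - a ^ 2 := by linarith
    rw [hu', hv', ← sub_nonneg]
    have hQ := key_mono a b ha0.le hab hb1
    have hN : 0 ≤ (γ * b + 1 + b ^ 2) * (a * (1 - a ^ 2) ^ 2)
        - (γ * a + 1 + a ^ 2) * (b * (1 - b ^ 2) ^ 2) := by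
      have hterm : 0 ≤ (γ * a ^ 3 - (1 - 3 * a ^ 2)) * (b * (b ^ 2 - a ^ 2) * (2 - a ^ 2 - b ^ 2)) := by
        apply mul_nonneg (by linarith)
        apply mul_nonneg (mul_nonneg hb0.le (by nlinarith)) (by nlinarith)
      have hN' : a ^ 2 * 0 ≤ a ^ 2 * ((γ * b + 1 + b ^ 2) * (a * (1 - a ^ 2) ^ 2)
          - (γ * a + 1 + a ^ 2) * (b * (1 - b ^ 2) ^ 2)) := by
        linarith [hterm, hQ]
      exact le_of_mul_le_mul_left hN' (pow_pos ha0 2)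
    have hE : -(c * (γ * a + 2 - (1 - a ^ 2))) / (a * (1 - a ^ 2) ^ 2)
        - -(c * (γ * b + 2 - (1 - b ^ 2))) / (b * (1 - b ^ 2) ^ 2)
        = c * ((γ * b + 1 + b ^ 2) * (a * (1 - a ^ 2) ^ 2)
            - (γ * a + 1 + a ^ 2) * (b * (1 - b ^ 2) ^ 2))
          / ((a * (1 - a ^ 2) ^ 2) * (b * (1 - b ^ 2) ^ 2)) := by
      have h1 : a ≠ 0 := ne_of_gt ha0
      have h2 : b ≠ 0 := ne_of_gt hb0
      have h3 : (1 : ℝ) - a ^ 2 ≠ 0 := by rw [ha2]; linarith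
      have h4 : (1 : ℝ) - b ^ 2 ≠ 0 := by rw [hb2]; linarith
      field_simp
      ring
    rw [hE]
    apply div_nonneg (mul_nonneg hc.le hN)
    have ha3 : (0:ℝ) < 1 - a ^ 2 := by rw [ha2]; linarith
    have hb3 : (0:ℝ) < 1 - b ^ 2 := by rw [hb2]; linarith
    exact (mul_pos (mul_pos ha0 (pow_pos ha3 2)) (mul_pos hb0 (pow_pos hb3 2))).le
  -- derivative of L
  have hLd : ∀ x ∈ Ioo (0:ℝ) 1, HasDerivAt L
      (if x ≤ β then -(c * (γ * Real.sqrt (1 - x) + 2 - x)) / (Real.sqrt (1 - x) * x ^ 2)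
       else -(c * (γ * s + 2 - β)) / (s * β ^ 2)) x := by
    intro x hx
    rcases lt_trichotomy x β with hxβ | rfl | hxβ
    · rw [if_pos hxβ.le]
      have hev : L =ᶠ[nhds x] P := by
        filter_upwards [Iio_mem_nhds hxβ] with y hy
        simp only [L, if_pos (le_of_lt (mem_Iio.1 hy))]
      exact (hPd x hx).congr_of_eventuallyEq hev
    · rw [if_pos le_rfl, ← hs_def]
      have hleft : HasDerivWithinAt L (-(c * (γ * s + 2 - x)) / (s * x ^ 2)) (Iic x) x := by
        apply (hPβ.hasDerivWithinAt).congr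
        · intro y hy
          simp only [L, if_pos (mem_Iic.1 hy)]
        · simp only [L, if_pos le_rfl]
      have htang : HasDerivAt (fun y => P x + deriv P x * (y - x)) (deriv P x) x := by
        simpa using (((hasDerivAt_id x).sub_const x).const_mul (deriv P x)).const_add (P x)
      have hright : HasDerivWithinAt L (-(c * (γ * s + 2 - x)) / (s * x ^ 2)) (Ici x) x := by
        rw [← hderivβ]
        apply (htang.hasDerivWithinAt).congr
        · intro y hy
          rcases eq_or_lt_of_le (mem_Ici.1 hy) with h | h
          · simp only [L, ← h, if_pos le_rfl]
            ring
          · simp only [L, if_neg (not_le.2 h)]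
        · simp only [L, if_pos le_rfl]
          ring
      have hu := hleft.union hright
      rw [Iic_union_Ici] at hu
      exact hasDerivWithinAt_univ.1 hu
    · rw [if_neg (not_le.2 hxβ), ← hderivβ]
      have htang : HasDerivAt (fun y => P β + deriv P β * (y - β)) (deriv P β) x := by
        simpa using (((hasDerivAt_id x).sub_const β).const_mul (deriv P β)).const_add (P β)
      have hev : L =ᶠ[nhds x] (fun y => P β + deriv P β * (y - β)) := by
        filter_upwards [Ioi_mem_nhds hxβ] with y hy
        simp only [L, if_neg (not_le.2 (mem_Ioi.1 hy))]
      exact htang.congr_of_eventuallyEq hev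
  -- monotonicity of deriv L
  have hmono : MonotoneOn (deriv L) (Ioo (0:ℝ) 1) := by
    intro x hx y hy hxy
    rw [(hLd x hx).deriv, (hLd y hy).deriv]
    by_cases hxb : x ≤ β
    · rw [if_pos hxb]
      by_cases hyb : y ≤ β
      · rw [if_pos hyb]
        exact hcore x y hx.1 hxy hyb
      · rw [if_neg hyb]
        have h := hcore x β hx.1 hxb le_rfl
        rwa [← hs_def] at h
    · rw [if_neg hxb, if_neg (fun h => hxb (le_trans hxy h))]
  have hdiff : DifferentiableOn ℝ L (Ioo (0:ℝ) 1) :=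
    fun x hx => ((hLd x hx).differentiableAt).differentiableWithinAt
  have hcont : ContinuousOn L (Ioc (0:ℝ) 1) := by
    intro x hx
    rcases eq_or_lt_of_le hx.2 with h1 | h1
    · have hβx : β < x := by rw [h1]; exact hβ1
      have haff : ContinuousAt (fun y => P β + deriv P β * (y - β)) x := by
        apply Continuous.continuousAt
        continuity
      have hev : L =ᶠ[nhds x] (fun y => P β + deriv P β * (y - β)) := by
        filter_upwards [Ioi_mem_nhds hβx] with y hy
        simp only [L, if_neg (not_le.2 (mem_Ioi.1 hy))]
      exact (haff.congr hev.symm).continuousWithinAt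
    · exact ((hLd x ⟨hx.1, h1⟩).differentiableAt.continuousAt).continuousWithinAt
  refine ⟨part1, MonotoneOn.convexOn_of_deriv (convex_Ioc 0 1) hcont ?_ ?_⟩
  · rwa [interior_Ioc]
  · rwa [interior_Ioc]
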